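/- Let (Ω, 𝓕, (𝓕_n)_{n≥0}, ℙ) be a filtered probability space, let (γ_n)_{n≥1} be positive reals with Σ_n γ_n² = ∞, let S_0 ≥ 0 be an 𝓕_0-measurable random variable, let (Y_n)_{n≥1} be real random variables with each Y_n being 𝓕_n-measurable and |Y_n| ≤ C almost surely for a constant C, and set S_n := S_0 + Σ_{j=1}^n Y_j. Assume S_n ≥ 0 almost surely for all n, and that there exist c > 0 and N' ∈ ℕ such that for all n ≥ N', almost surely 𝔼[S_{n+1}² − S_n² | 𝓕_n] ≥ c γ_n². Then ℙ(lim_{n→∞} S_n = 0) = 0. -/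

import Mathlib

open MeasureTheory Filter Topology

/-- Lemma B.2: nonconvergence of the nonnegative process `S n` to `0` in the
non-square-summable step-size case. -/
lemma auxKey
    {Ω : Type*} {m0 : MeasurableSpace Ω} {μ : Measure Ω} [IsProbabilityMeasure μ]
    (ℱ : Filtration ℕ m0)
    (γ : ℕ → ℝ) (hγ2 : ¬ Summable (fun n => γ n ^ 2))
    (S : ℕ → Ω → ℝ) (hSmeas : ∀ n, Measurable[ℱ n] (S n))
    (hSnonneg : ∀ n, ∀ᵐ ω ∂μ, 0 ≤ S n ω)
    (Y : ℕ → Ω → ℝ) (hSrec : ∀ n ω, S (n + 1) ω = S n ω + Y (n + 1) ω)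
    (C : ℝ) (hC : 0 ≤ C) (hYbound : ∀ n, 1 ≤ n → ∀ᵐ ω ∂μ, |Y n ω| ≤ C)
    (c : ℝ) (hc : 0 < c) (N : ℕ) (hγpos : ∀ n, N ≤ n → 0 < γ n)
    (hS2 : ∀ n, N ≤ n →
      ∀ᵐ ω ∂μ, c * γ n ^ 2 ≤ (μ[fun ω' => S (n + 1) ω' ^ 2 - S n ω' ^ 2 | ℱ n]) ω) :
    μ {ω | ∀ k, N ≤ k → S k ω ≤ 1} = 0 := by
  classical
  by_contra hB
  set B : Set Ω := {ω | ∀ k, N ≤ k → S k ω ≤ 1} with hBdef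
  have hSmeas0 : ∀ n, Measurable (S n) := fun n => (hSmeas n).mono (ℱ.le n) le_rfl
  have hBmeas : MeasurableSet B := by
    have h : B = ⋂ (k : ℕ) (_ : N ≤ k), {ω | S k ω ≤ 1} := by
      ext ω; simp [hBdef]
    rw [h]
    exact MeasurableSet.iInter fun k => MeasurableSet.iInter fun _ =>
      measurableSet_le (hSmeas0 k) measurable_const
  set A : ℕ → Set Ω := fun n => {ω | ∀ k, N ≤ k → k ≤ n → S k ω ≤ 1} with hAdef
  have hAmeas : ∀ n, MeasurableSet[ℱ n] (A n) := by
    intro n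
    have h : A n = ⋂ (k : ℕ) (_ : N ≤ k) (_ : k ≤ n), {ω | S k ω ≤ 1} := by
      ext ω; simp [hAdef]
    rw [h]
    exact MeasurableSet.iInter fun k => MeasurableSet.iInter fun _ =>
      MeasurableSet.iInter fun hk =>
        measurableSet_le ((hSmeas k).mono (ℱ.mono hk) le_rfl) measurable_const
  have hAmono : ∀ n, A (n + 1) ⊆ A n := fun n ω hω k hk1 hk2 =>
    hω k hk1 (hk2.trans (Nat.le_succ n))
  have hBsubA : ∀ n, B ⊆ A n := fun n ω hω k hk _ => hω k hk
  set I : ℕ → Ω → ℝ := fun n => (A n).indicator (fun _ => (1 : ℝ)) with hIdef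
  have hInn : ∀ n ω, 0 ≤ I n ω := by
    intro n ω
    by_cases h : ω ∈ A n <;>
      simp [hIdef, Set.indicator_of_mem, Set.indicator_of_notMem, h]
  have hIbd : ∀ n ω, ‖I n ω‖ ≤ 1 := by
    intro n ω
    by_cases h : ω ∈ A n <;>
      simp [hIdef, Set.indicator_of_mem, Set.indicator_of_notMem, h]
  have hIsm : ∀ n, StronglyMeasurable[ℱ n] (I n) := fun n =>
    stronglyMeasurable_const.indicator (hAmeas n)
  have hImeas : ∀ n, Measurable (I n) := fun n =>
    measurable_const.indicator ((ℱ.le n) _ (hAmeas n))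
  set f : ℕ → Ω → ℝ := fun n ω => S (n + 1) ω ^ 2 - S n ω ^ 2 with hfdef
  have hcond : ∀ n, N ≤ n → ∀ᵐ ω ∂μ, c * γ n ^ 2 ≤ (μ[f n | ℱ n]) ω := fun n hn =>
    hS2 n hn
  have hγpos2 : ∀ n, N ≤ n → 0 < c * γ n ^ 2 := fun n hn =>
    mul_pos hc (pow_pos (hγpos n hn) 2)
  have hμne : (μ : Measure Ω) ≠ 0 := IsProbabilityMeasure.ne_zero μ
  have haene : (ae μ).NeBot := ae_neBot.mpr hμne
  have hfint : ∀ n, N ≤ n → Integrable (f n) μ := by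
    intro n hn
    by_contra hni
    have h0 : μ[f n | ℱ n] = 0 := condExp_of_not_integrable hni
    have h1 := hcond n hn
    rw [h0] at h1
    obtain ⟨ω, hω⟩ := h1.exists
    simp only [Pi.zero_apply] at hω
    exact absurd hω (not_le.mpr (hγpos2 n hn))
  have hDint : ∀ n, N ≤ n → Integrable (I n * f n) μ := by
    intro n hn
    exact (hfint n hn).bdd_mul (hImeas n).aestronglyMeasurable (ae_of_all _ fun ω => hIbd n ω)
  have hDcond : ∀ n, N ≤ n → μ[I n * f n | ℱ n] =ᵐ[μ] I n * μ[f n | ℱ n] := fun n hn =>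
    condExp_mul_of_stronglyMeasurable_left (hIsm n) (hDint n hn) (hfint n hn)
  -- lower bound on each increment
  have hlow : ∀ n, N ≤ n →
      (μ B).toReal * (c * γ n ^ 2) ≤ ∫ ω, (I n * f n) ω ∂μ := by
    intro n hn
    have h1 : ∫ ω, (I n * f n) ω ∂μ = ∫ ω, (μ[I n * f n | ℱ n]) ω ∂μ :=
      (integral_condExp (ℱ.le n)).symm
    have h2 : ∀ᵐ ω ∂μ,
        B.indicator (fun _ => c * γ n ^ 2) ω ≤ (μ[I n * f n | ℱ n]) ω := by
      filter_upwards [hDcond n hn, hcond n hn] with ω hω1 hω2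
      rw [hω1]
      by_cases hωB : ω ∈ B
      · rw [Set.indicator_of_mem hωB]
        have hI1 : I n ω = 1 := Set.indicator_of_mem (hBsubA n hωB) _
        simpa [Pi.mul_apply, hI1] using hω2
      · rw [Set.indicator_of_notMem hωB]
        exact mul_nonneg (hInn n ω) ((hγpos2 n hn).le.trans hω2)
    have h3 : ∫ ω, B.indicator (fun _ => c * γ n ^ 2) ω ∂μ ≤
        ∫ ω, (μ[I n * f n | ℱ n]) ω ∂μ :=
      integral_mono_ae ((integrable_const _).indicator hBmeas) integrable_condExp h2
    rw [integral_indicator_const _ hBmeas] at h3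
    rw [h1]
    simpa [smul_eq_mul, measureReal_def] using h3
  -- a.s. upper bound on partial sums
  have hW : ∀ᵐ ω ∂μ, ∀ n, ∑ j ∈ Finset.Ico N n, (I j * f j) ω ≤ (1 + C) ^ 2 := by
    have hY' : ∀ᵐ ω ∂μ, ∀ j, 1 ≤ j → |Y j ω| ≤ C := by
      rw [ae_all_iff]
      intro j
      by_cases hj : 1 ≤ j
      · filter_upwards [hYbound j hj] with ω h _; exact h
      · exact ae_of_all μ fun ω h => absurd h hj
    have hS' : ∀ᵐ ω ∂μ, ∀ n, 0 ≤ S n ω := ae_all_iff.mpr hSnonneg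
    filter_upwards [hY', hS'] with ω hYω hSω
    have hSsucc : ∀ n, N ≤ n → ω ∈ A n → S (n + 1) ω ^ 2 ≤ (1 + C) ^ 2 := by
      intro n hn hA'
      have h1 : S n ω ≤ 1 := hA' n hn le_rfl
      have h2 : S (n + 1) ω ≤ 1 + C := by
        rw [hSrec]
        have h3 := (abs_le.mp (hYω (n + 1) (Nat.succ_le_succ (Nat.zero_le n)))).2
        linarith
      exact pow_le_pow_left₀ (hSω (n + 1)) h2 2
    have hQ : ∀ m : ℕ,
        (ω ∈ A (N + m) ∧
          ∑ j ∈ Finset.Ico N (N + m + 1), (I j * f j) ω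
            = S (N + m + 1) ω ^ 2 - S N ω ^ 2) ∨
        (ω ∉ A (N + m) ∧
          ∑ j ∈ Finset.Ico N (N + m + 1), (I j * f j) ω ≤ (1 + C) ^ 2) := by
      intro m
      induction m with
      | zero =>
        simp only [Nat.add_zero]
        rw [Finset.sum_Ico_succ_top le_rfl, Finset.Ico_self, Finset.sum_empty, zero_add]
        by_cases h : ω ∈ A N
        · left
          refine ⟨h, ?_⟩
          simp [hIdef, hfdef, Set.indicator_of_mem h]
        · right
          refine ⟨h, ?_⟩
          simp only [Pi.mul_apply, hIdef, Set.indicator_of_notMem h, zero_mul]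
          positivity
      | succ m ih =>
        have hsum : ∑ j ∈ Finset.Ico N (N + (m + 1) + 1), (I j * f j) ω
            = ∑ j ∈ Finset.Ico N (N + m + 1), (I j * f j) ω + (I (N + m + 1) * f (N + m + 1)) ω := by
          rw [show N + (m + 1) + 1 = (N + m + 1) + 1 by ring]
          exact Finset.sum_Ico_succ_top (by omega) _
        rcases ih with ⟨hmem, heq⟩ | ⟨hnmem, hle⟩
        · by_cases h : ω ∈ A (N + m + 1)
          · left
            refine ⟨by simpa [Nat.add_assoc] using h, ?_⟩
            rw [hsum, heq]
            simp only [Pi.mul_apply, hIdef, Set.indicator_of_mem h, one_mul, hfdef]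
            ring
          · right
            refine ⟨by simpa [Nat.add_assoc] using h, ?_⟩
            rw [hsum, heq]
            simp only [Pi.mul_apply, hIdef, Set.indicator_of_notMem h, zero_mul, add_zero]
            have h1 : S (N + m + 1) ω ^ 2 ≤ (1 + C) ^ 2 :=
              hSsucc (N + m) (Nat.le_add_right _ _) hmem
            nlinarith [sq_nonneg (S N ω)]
        · right
          have h : ω ∉ A (N + m + 1) := fun hx => hnmem (hAmono _ hx)
          refine ⟨by simpa [Nat.add_assoc] using h, ?_⟩
          rw [hsum]
          simp only [Pi.mul_apply, hIdef, Set.indicator_of_notMem h, zero_mul, add_zero]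
          exact hle
    intro n
    rcases le_or_gt n N with hn | hn
    · rw [Finset.Ico_eq_empty (by omega), Finset.sum_empty]
      positivity
    · obtain ⟨m, rfl⟩ : ∃ m, n = N + m + 1 := ⟨n - N - 1, by omega⟩
      rcases hQ m with ⟨hmem, heq⟩ | ⟨_, hle⟩
      · rw [heq]
        have h1 : S (N + m + 1) ω ^ 2 ≤ (1 + C) ^ 2 :=
          hSsucc (N + m) (Nat.le_add_right _ _) hmem
        nlinarith [sq_nonneg (S N ω)]
      · exact hle
  -- combine: bounded partial sums of γ²
  have ht : 0 < (μ B).toReal := ENNReal.toReal_pos hB (measure_ne_top μ B)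
  have hbound : ∀ n : ℕ,
      (μ B).toReal * c * ∑ j ∈ Finset.Ico N n, γ j ^ 2 ≤ (1 + C) ^ 2 := by
    intro n
    have hWint : Integrable (fun ω => ∑ j ∈ Finset.Ico N n, (I j * f j) ω) μ := by
      apply integrable_finset_sum
      intro j hj
      exact hDint j (Finset.mem_Ico.mp hj).1
    have hW' : ∀ᵐ ω ∂μ, ∑ j ∈ Finset.Ico N n, (I j * f j) ω ≤ (1 + C) ^ 2 :=
      hW.mono fun ω h => h n
    have h1 : ∫ ω, ∑ j ∈ Finset.Ico N n, (I j * f j) ω ∂μ ≤ (1 + C) ^ 2 := by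
      have h2 : ∫ ω, ∑ j ∈ Finset.Ico N n, (I j * f j) ω ∂μ ≤
          ∫ _ω, (1 + C) ^ 2 ∂μ :=
        integral_mono_ae hWint (integrable_const _) hW'
      simpa [integral_const] using h2
    have h3 : ∑ j ∈ Finset.Ico N n, (μ B).toReal * (c * γ j ^ 2) ≤
        ∫ ω, ∑ j ∈ Finset.Ico N n, (I j * f j) ω ∂μ := by
      rw [integral_finset_sum _ fun j hj => hDint j (Finset.mem_Ico.mp hj).1]
      exact Finset.sum_le_sum fun j hj => hlow j (Finset.mem_Ico.mp hj).1
    have h4 : (μ B).toReal * c * ∑ j ∈ Finset.Ico N n, γ j ^ 2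
        = ∑ j ∈ Finset.Ico N n, (μ B).toReal * (c * γ j ^ 2) := by
      rw [Finset.mul_sum]
      exact Finset.sum_congr rfl fun j _ => by ring
    rw [h4]
    exact h3.trans h1
  apply hγ2
  have hK : ∀ n : ℕ, ∑ i ∈ Finset.range n, γ (N + i) ^ 2
      ≤ (1 + C) ^ 2 / ((μ B).toReal * c) := by
    intro n
    have h := hbound (N + n)
    rw [Finset.sum_Ico_eq_sum_range] at h
    simp only [Nat.add_sub_cancel_left] at h
    rw [le_div_iff₀ (mul_pos ht hc)]
    nlinarith [h]
  have hsum : Summable fun i => γ (N + i) ^ 2 :=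
    summable_of_sum_range_le (fun i => sq_nonneg _) hK
  have hsum2 : Summable fun i => γ (i + N) ^ 2 := by
    have he : (fun i => γ (i + N) ^ 2) = fun i => γ (N + i) ^ 2 := by
      funext i; rw [Nat.add_comm]
    rw [he]; exact hsum
  exact (summable_nat_add_iff N).mp hsum2

theorem stmt_1
    {Ω : Type*} {m0 : MeasurableSpace Ω} {μ : Measure Ω} [IsProbabilityMeasure μ]
    (ℱ : Filtration ℕ m0)
    (γ : ℕ → ℝ) (hγpos : ∀ n, 1 ≤ n → 0 < γ n)
    (hγ2 : ¬ Summable (fun n => γ n ^ 2))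
    (S0 : Ω → ℝ) (hS0meas : Measurable[ℱ 0] S0) (hS0 : ∀ᵐ ω ∂μ, 0 ≤ S0 ω)
    (Y : ℕ → Ω → ℝ) (hYmeas : ∀ n, 1 ≤ n → Measurable[ℱ n] (Y n))
    (C : ℝ) (hYbound : ∀ n, 1 ≤ n → ∀ᵐ ω ∂μ, |Y n ω| ≤ C)
    (S : ℕ → Ω → ℝ)
    (hSdef : ∀ n ω, S n ω = S0 ω + ∑ j ∈ Finset.Icc 1 n, Y j ω)
    (hSnonneg : ∀ n, ∀ᵐ ω ∂μ, 0 ≤ S n ω)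
    (c : ℝ) (hc : 0 < c) (N' : ℕ)
    (hS2 : ∀ n, N' ≤ n →
      ∀ᵐ ω ∂μ, c * γ n ^ 2 ≤ (μ[fun ω' => S (n + 1) ω' ^ 2 - S n ω' ^ 2 | ℱ n]) ω) :
    μ {ω | Tendsto (fun n => S n ω) atTop (𝓝 0)} = 0 := by
  have hμne : (μ : Measure Ω) ≠ 0 := IsProbabilityMeasure.ne_zero μ
  have haene : (ae μ).NeBot := ae_neBot.mpr hμne
  have hC : 0 ≤ C := by
    obtain ⟨ω, hω⟩ := (hYbound 1 le_rfl).exists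
    exact (abs_nonneg _).trans hω
  have hSmeas : ∀ n, Measurable[ℱ n] (S n) := by
    intro n
    have h : S n = fun ω => S0 ω + ∑ j ∈ Finset.Icc 1 n, Y j ω :=
      funext fun ω => hSdef n ω
    rw [h]
    refine Measurable.add (hS0meas.mono (ℱ.mono (Nat.zero_le n)) le_rfl) ?_
    refine Finset.measurable_sum _ fun j hj => ?_
    rcases Finset.mem_Icc.mp hj with ⟨hj1, hjn⟩
    exact (hYmeas j hj1).mono (ℱ.mono hjn) le_rfl
  have hSrec : ∀ n ω, S (n + 1) ω = S n ω + Y (n + 1) ω := by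
    intro n ω
    rw [hSdef, hSdef, Finset.sum_Icc_succ_top (Nat.succ_le_succ (Nat.zero_le n))]
    ring
  have key : ∀ N, N' ≤ N → 1 ≤ N → μ {ω | ∀ k, N ≤ k → S k ω ≤ 1} = 0 := by
    intro N h1 h2
    exact auxKey ℱ γ hγ2 S hSmeas hSnonneg Y hSrec C hC hYbound c hc N
      (fun n hn => hγpos n (h2.trans hn)) (fun n hn => hS2 n (h1.trans hn))
  have hsub : {ω | Tendsto (fun n => S n ω) atTop (𝓝 0)} ⊆
      ⋃ M : ℕ, {ω | ∀ k, M + max N' 1 ≤ k → S k ω ≤ 1} := by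
    intro ω hω
    obtain ⟨M, hM⟩ := eventually_atTop.mp (hω.eventually_le_const one_pos)
    exact Set.mem_iUnion.mpr ⟨M, fun k hk => hM k (by omega)⟩
  exact measure_mono_null hsub
    (measure_iUnion_null fun M => key (M + max N' 1) (by omega) (by omega))
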